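/- Suppose the monodromy matrix satisfies M(E*) = Ψ_{E*}(1) = I for some E* ∈ ℝ (the condition at a Dirac point with k = 0). Then the discriminant D is twice differentiable at E* and D''(E*) = 2·[ (∫₀¹ ε(x)·ψ_{E*,1}(x)·ψ_{E*,2}(x) dx)² − (∫₀¹ ε(x)·ψ_{E*,1}(x)² dx)·(∫₀¹ ε(x)·ψ_{E*,2}(x)² dx) ], and this quantity is strictly negative: D''(E*) < 0. -/

import Mathlib

open Matrix MeasureTheory intervalIntegral Set

lemma aux_entry_bound (a b c d α β : ℝ → ℝ) (K : ℝ) (hK0 : 0 ≤ K)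
    (hda : ∀ t, HasDerivAt a (α t * c t) t) (hdb : ∀ t, HasDerivAt b (α t * d t) t)
    (hdc : ∀ t, HasDerivAt c (β t * a t) t) (hdd : ∀ t, HasDerivAt d (β t * b t) t)
    (hαβ : ∀ t ∈ Icc (0:ℝ) 1, |α t| + |β t| ≤ K)
    (ha0 : a 0 = 1) (hb0 : b 0 = 0) (hc0 : c 0 = 0) (hd0 : d 0 = 1) :
    ∀ x ∈ Icc (0:ℝ) 1,
      |a x| ≤ Real.sqrt (2 * Real.exp K) ∧ |b x| ≤ Real.sqrt (2 * Real.exp K)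
      ∧ |c x| ≤ Real.sqrt (2 * Real.exp K) ∧ |d x| ≤ Real.sqrt (2 * Real.exp K) := by
  intro x hx
  have hφd : ∀ t : ℝ, HasDerivAt (fun t => a t * a t + b t * b t + (c t * c t + d t * d t))
      ((α t + β t) * (2 * (a t * c t + b t * d t))) t := by
    intro t
    have h := (((hda t).mul (hda t)).add ((hdb t).mul (hdb t))).add
      (((hdc t).mul (hdc t)).add ((hdd t).mul (hdd t)))
    have he : (α t + β t) * (2 * (a t * c t + b t * d t))
        = α t * c t * a t + a t * (α t * c t) + (α t * d t * b t + b t * (α t * d t)) +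
          (β t * a t * c t + c t * (β t * a t) + (β t * b t * d t + d t * (β t * b t))) := by
      ring
    rw [he]; exact h
  have hφnn : ∀ t : ℝ, 0 ≤ a t * a t + b t * b t + (c t * c t + d t * d t) :=
    fun t => add_nonneg (add_nonneg (mul_self_nonneg _) (mul_self_nonneg _))
      (add_nonneg (mul_self_nonneg _) (mul_self_nonneg _))
  have hgr := norm_le_gronwallBound_of_norm_deriv_right_le
    (f := fun t => a t * a t + b t * b t + (c t * c t + d t * d t))
    (f' := fun t => (α t + β t) * (2 * (a t * c t + b t * d t)))
    (δ := 2) (K := K) (ε := 0) (a := 0) (b := 1)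
    (continuous_iff_continuousAt.2 fun t => (hφd t).continuousAt).continuousOn
    (fun t _ => (hφd t).hasDerivWithinAt) ?_ ?_
  · have hφx := hgr x hx
    rw [show ‖(fun t => a t * a t + b t * b t + (c t * c t + d t * d t)) x‖
      = |a x * a x + b x * b x + (c x * c x + d x * d x)| from rfl,
      abs_of_nonneg (hφnn x), gronwallBound_ε0] at hφx
    have h2 : a x * a x + b x * b x + (c x * c x + d x * d x) ≤ 2 * Real.exp K := by
      refine hφx.trans ?_
      have hh : K * (x - 0) ≤ K * 1 := by
        apply mul_le_mul_of_nonneg_left _ hK0; linarith [hx.2]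
      have := Real.exp_le_exp.2 hh
      rw [mul_one] at this
      linarith
    refine ⟨?_, ?_, ?_, ?_⟩ <;>
      · rw [← Real.sqrt_mul_self_eq_abs]
        apply Real.sqrt_le_sqrt
        nlinarith [mul_self_nonneg (a x), mul_self_nonneg (b x), mul_self_nonneg (c x),
          mul_self_nonneg (d x)]
  · show ‖a 0 * a 0 + b 0 * b 0 + (c 0 * c 0 + d 0 * d 0)‖ ≤ 2
    rw [ha0, hb0, hc0, hd0]; norm_num
  · intro t ht
    have ht' : t ∈ Icc (0:ℝ) 1 := ⟨ht.1, ht.2.le⟩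
    show ‖(α t + β t) * (2 * (a t * c t + b t * d t))‖
      ≤ K * ‖a t * a t + b t * b t + (c t * c t + d t * d t)‖ + 0
    rw [Real.norm_eq_abs, Real.norm_eq_abs, add_zero, abs_of_nonneg (hφnn t), abs_mul]
    have h1 : |α t + β t| ≤ K := (abs_add_le _ _).trans (hαβ t ht')
    have h2 : |2 * (a t * c t + b t * d t)| ≤ a t * a t + b t * b t + (c t * c t + d t * d t) := by
      rw [abs_le]
      constructor <;> nlinarith [sq_nonneg (a t - c t), sq_nonneg (b t - d t),
        sq_nonneg (a t + c t), sq_nonneg (b t + d t)]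
    exact mul_le_mul h1 h2 (abs_nonneg _) hK0

theorem aux_prod_diff (x1 y1 x2 y2 B d1 d2 : ℝ) (hx : |x1| ≤ B) (hy : |y2| ≤ B)
    (h1 : |x1 - x2| ≤ d1) (h2 : |y1 - y2| ≤ d2) : |x1 * y1 - x2 * y2| ≤ B * d2 + B * d1 := by
  have hB : 0 ≤ B := (abs_nonneg _).trans hx
  have e : x1 * y1 - x2 * y2 = x1 * (y1 - y2) + y2 * (x1 - x2) := by ring
  calc |x1 * y1 - x2 * y2| = |x1 * (y1 - y2) + y2 * (x1 - x2)| := by rw [e]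
    _ ≤ |x1 * (y1 - y2)| + |y2 * (x1 - x2)| := abs_add_le _ _
    _ = |x1| * |y1 - y2| + |y2| * |x1 - x2| := by rw [abs_mul, abs_mul]
    _ ≤ B * d2 + B * d1 := add_le_add
        (mul_le_mul hx h2 (abs_nonneg _) hB) (mul_le_mul hy h1 (abs_nonneg _) hB)

theorem aux_abs4 (A B C D : ℝ) : |A + B - C - D| ≤ |A| + |B| + |C| + |D| := by
  calc |A + B - C - D| ≤ |A + B - C| + |D| := abs_sub _ _
    _ ≤ (|A + B| + |C|) + |D| := by linarith [abs_sub (A + B) C]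
    _ ≤ ((|A| + |B|) + |C|) + |D| := by linarith [abs_add_le A B]
    _ = |A| + |B| + |C| + |D| := by ring


set_option maxHeartbeats 1000000 in
/-- At a Dirac point with `k = 0` (i.e. `M(E*) = Ψ_{E*}(1) = I`), the
discriminant `D(E) = tr Ψ_E(1)` is twice differentiable at `E*` with
`D''(E*) = 2[(∫₀¹ ε ψ₁ψ₂)² − (∫₀¹ ε ψ₁²)(∫₀¹ ε ψ₂²)] < 0`,
where `ψ_{E*,j}(x) = Ψ_{E*}(x) 0 j` is the first entry of the `j`-th column. -/
theorem discriminant_second_derivative_at_dirac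
    (ε μ : ℝ → ℝ)
    (hεc : Continuous ε) (hμc : Continuous μ)
    (hεp : ∀ x, ε (x + 1) = ε x) (hμp : ∀ x, μ (x + 1) = μ x)
    (hεpos : ∀ x, 0 < ε x) (hμpos : ∀ x, 0 < μ x)
    (Ψ : ℝ → ℝ → Matrix (Fin 2) (Fin 2) ℝ)
    (hΨ0 : ∀ E : ℝ, Ψ E 0 = 1)
    (hΨ : ∀ E x : ℝ, ∀ i j, HasDerivAt (fun y => Ψ E y i j)
      ((!![(0 : ℝ), μ x; -E * ε x, 0] * Ψ E x) i j) x)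
    (Estar : ℝ)
    (hDirac : Ψ Estar 1 = 1) :
    ∀ a : ℝ,
      a = 2 * ((∫ x in (0 : ℝ)..1, ε x * Ψ Estar x 0 0 * Ψ Estar x 0 1) ^ 2
        - (∫ x in (0 : ℝ)..1, ε x * (Ψ Estar x 0 0) ^ 2)
          * (∫ x in (0 : ℝ)..1, ε x * (Ψ Estar x 0 1) ^ 2)) →
      (∃ D' : ℝ → ℝ,
        (∀ᶠ E in nhds Estar, HasDerivAt (fun t => (Ψ t 1).trace) (D' E) E) ∧
        HasDerivAt D' a Estar) ∧
      a < 0 := by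
  intro a ha
  -- entrywise derivatives
  have hD00 : ∀ E x : ℝ, HasDerivAt (fun y => Ψ E y 0 0) (μ x * Ψ E x 1 0) x := by
    intro E x; have h := hΨ E x 0 0; simpa [Matrix.mul_apply, Fin.sum_univ_two] using h
  have hD01 : ∀ E x : ℝ, HasDerivAt (fun y => Ψ E y 0 1) (μ x * Ψ E x 1 1) x := by
    intro E x; have h := hΨ E x 0 1; simpa [Matrix.mul_apply, Fin.sum_univ_two] using h
  have hD10 : ∀ E x : ℝ, HasDerivAt (fun y => Ψ E y 1 0) (-E * ε x * Ψ E x 0 0) x := by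
    intro E x; have h := hΨ E x 1 0; simpa [Matrix.mul_apply, Fin.sum_univ_two] using h
  have hD11 : ∀ E x : ℝ, HasDerivAt (fun y => Ψ E y 1 1) (-E * ε x * Ψ E x 0 1) x := by
    intro E x; have h := hΨ E x 1 1; simpa [Matrix.mul_apply, Fin.sum_univ_two] using h
  have hcont : ∀ (E : ℝ) (i j : Fin 2), Continuous fun x => Ψ E x i j := by
    intro E i j
    exact continuous_iff_continuousAt.2 fun x => (hΨ E x i j).continuousAt
  -- entries at 0
  have h0 : ∀ E : ℝ, Ψ E 0 0 0 = 1 ∧ Ψ E 0 0 1 = 0 ∧ Ψ E 0 1 0 = 0 ∧ Ψ E 0 1 1 = 1 := by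
    intro E; rw [hΨ0 E]; norm_num [Matrix.one_apply]
  have hd1 : Ψ Estar 1 0 0 = 1 ∧ Ψ Estar 1 0 1 = 0 ∧ Ψ Estar 1 1 0 = 0 ∧ Ψ Estar 1 1 1 = 1 := by
    rw [hDirac]; norm_num [Matrix.one_apply]
  -- determinant is 1
  have hdet : ∀ E x : ℝ, Ψ E x 0 0 * Ψ E x 1 1 - Ψ E x 0 1 * Ψ E x 1 0 = 1 := by
    intro E x
    have hf : ∀ y : ℝ, HasDerivAt (fun t => Ψ E t 0 0 * Ψ E t 1 1 - Ψ E t 0 1 * Ψ E t 1 0) 0 y := by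
      intro y
      have h := ((hD00 E y).mul (hD11 E y)).sub ((hD01 E y).mul (hD10 E y))
      exact h.congr_deriv (by ring)
    have hc := is_const_of_deriv_eq_zero
      (f := fun t => Ψ E t 0 0 * Ψ E t 1 1 - Ψ E t 0 1 * Ψ E t 1 0)
      (fun y => (hf y).differentiableAt) (fun y => (hf y).deriv) x 0
    rw [hc]
    obtain ⟨e1, e2, e3, e4⟩ := h0 E
    rw [e1, e2, e3, e4]; ring
  -- the four fundamental FTC identities
  have hW1 : ∀ E F x : ℝ, Ψ E x 1 1 * Ψ F x 0 0 - Ψ E x 0 1 * Ψ F x 1 0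
      = 1 - (E - F) * ∫ s in (0:ℝ)..x, ε s * (Ψ E s 0 1 * Ψ F s 0 0) := by
    intro E F x
    have hder : ∀ s : ℝ, HasDerivAt (fun y => Ψ E y 1 1 * Ψ F y 0 0 - Ψ E y 0 1 * Ψ F y 1 0)
        (-(E - F) * (ε s * (Ψ E s 0 1 * Ψ F s 0 0))) s := by
      intro s
      have h := ((hD11 E s).mul (hD00 F s)).sub ((hD01 E s).mul (hD10 F s))
      exact h.congr_deriv (by ring)
    have hint : IntervalIntegrable (fun s => -(E - F) * (ε s * (Ψ E s 0 1 * Ψ F s 0 0)))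
        MeasureTheory.volume 0 x :=
      Continuous.intervalIntegrable
        (continuous_const.mul (hεc.mul ((hcont E 0 1).mul (hcont F 0 0)))) 0 x
    have hi := intervalIntegral.integral_eq_sub_of_hasDerivAt (fun s _ => hder s) hint
    rw [intervalIntegral.integral_const_mul] at hi
    obtain ⟨e1, e2, e3, e4⟩ := h0 E
    obtain ⟨f1, f2, f3, f4⟩ := h0 F
    rw [e2, e4, f1, f3] at hi
    linarith [hi]
  have hW2 : ∀ E F x : ℝ, Ψ E x 1 1 * Ψ F x 0 1 - Ψ E x 0 1 * Ψ F x 1 1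
      = -((E - F) * ∫ s in (0:ℝ)..x, ε s * (Ψ E s 0 1 * Ψ F s 0 1)) := by
    intro E F x
    have hder : ∀ s : ℝ, HasDerivAt (fun y => Ψ E y 1 1 * Ψ F y 0 1 - Ψ E y 0 1 * Ψ F y 1 1)
        (-(E - F) * (ε s * (Ψ E s 0 1 * Ψ F s 0 1))) s := by
      intro s
      have h := ((hD11 E s).mul (hD01 F s)).sub ((hD01 E s).mul (hD11 F s))
      exact h.congr_deriv (by ring)
    have hint : IntervalIntegrable (fun s => -(E - F) * (ε s * (Ψ E s 0 1 * Ψ F s 0 1)))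
        MeasureTheory.volume 0 x :=
      Continuous.intervalIntegrable
        (continuous_const.mul (hεc.mul ((hcont E 0 1).mul (hcont F 0 1)))) 0 x
    have hi := intervalIntegral.integral_eq_sub_of_hasDerivAt (fun s _ => hder s) hint
    rw [intervalIntegral.integral_const_mul] at hi
    obtain ⟨e1, e2, e3, e4⟩ := h0 E
    obtain ⟨f1, f2, f3, f4⟩ := h0 F
    rw [e2, e4, f2, f4] at hi
    linarith [hi]
  have hW3 : ∀ E F x : ℝ, -(Ψ E x 1 0) * Ψ F x 0 0 + Ψ E x 0 0 * Ψ F x 1 0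
      = (E - F) * ∫ s in (0:ℝ)..x, ε s * (Ψ E s 0 0 * Ψ F s 0 0) := by
    intro E F x
    have hder : ∀ s : ℝ, HasDerivAt (fun y => -(Ψ E y 1 0) * Ψ F y 0 0 + Ψ E y 0 0 * Ψ F y 1 0)
        ((E - F) * (ε s * (Ψ E s 0 0 * Ψ F s 0 0))) s := by
      intro s
      have h := (((hD10 E s).neg).mul (hD00 F s)).add ((hD00 E s).mul (hD10 F s))
      exact h.congr_deriv (by simp only [Pi.neg_apply]; ring)
    have hint : IntervalIntegrable (fun s => (E - F) * (ε s * (Ψ E s 0 0 * Ψ F s 0 0)))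
        MeasureTheory.volume 0 x :=
      Continuous.intervalIntegrable
        (continuous_const.mul (hεc.mul ((hcont E 0 0).mul (hcont F 0 0)))) 0 x
    have hi := intervalIntegral.integral_eq_sub_of_hasDerivAt (fun s _ => hder s) hint
    rw [intervalIntegral.integral_const_mul] at hi
    obtain ⟨e1, e2, e3, e4⟩ := h0 E
    obtain ⟨f1, f2, f3, f4⟩ := h0 F
    rw [e1, e3, f1, f3] at hi
    linarith [hi]
  have hW4 : ∀ E F x : ℝ, -(Ψ E x 1 0) * Ψ F x 0 1 + Ψ E x 0 0 * Ψ F x 1 1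
      = 1 + (E - F) * ∫ s in (0:ℝ)..x, ε s * (Ψ E s 0 0 * Ψ F s 0 1) := by
    intro E F x
    have hder : ∀ s : ℝ, HasDerivAt (fun y => -(Ψ E y 1 0) * Ψ F y 0 1 + Ψ E y 0 0 * Ψ F y 1 1)
        ((E - F) * (ε s * (Ψ E s 0 0 * Ψ F s 0 1))) s := by
      intro s
      have h := (((hD10 E s).neg).mul (hD01 F s)).add ((hD00 E s).mul (hD11 F s))
      exact h.congr_deriv (by simp only [Pi.neg_apply]; ring)
    have hint : IntervalIntegrable (fun s => (E - F) * (ε s * (Ψ E s 0 0 * Ψ F s 0 1)))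
        MeasureTheory.volume 0 x :=
      Continuous.intervalIntegrable
        (continuous_const.mul (hεc.mul ((hcont E 0 0).mul (hcont F 0 1)))) 0 x
    have hi := intervalIntegral.integral_eq_sub_of_hasDerivAt (fun s _ => hder s) hint
    rw [intervalIntegral.integral_const_mul] at hi
    obtain ⟨e1, e2, e3, e4⟩ := h0 E
    obtain ⟨f1, f2, f3, f4⟩ := h0 F
    rw [e1, e3, f2, f4] at hi
    linarith [hi]
  -- row identities
  have hrow0 : ∀ F G x : ℝ, Ψ G x 0 0 = Ψ F x 0 0
      + (F - G) * (Ψ F x 0 1 * (∫ s in (0:ℝ)..x, ε s * (Ψ F s 0 0 * Ψ G s 0 0))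
        - Ψ F x 0 0 * (∫ s in (0:ℝ)..x, ε s * (Ψ F s 0 1 * Ψ G s 0 0))) := by
    intro F G x
    linear_combination (Ψ F x 0 0) * hW1 F G x + (Ψ F x 0 1) * hW3 F G x
      - (Ψ G x 0 0) * hdet F x
  have hrow1 : ∀ F G x : ℝ, Ψ G x 0 1 = Ψ F x 0 1
      + (F - G) * (Ψ F x 0 1 * (∫ s in (0:ℝ)..x, ε s * (Ψ F s 0 0 * Ψ G s 0 1))
        - Ψ F x 0 0 * (∫ s in (0:ℝ)..x, ε s * (Ψ F s 0 1 * Ψ G s 0 1))) := by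
    intro F G x
    linear_combination (Ψ F x 0 0) * hW2 F G x + (Ψ F x 0 1) * hW4 F G x
      - (Ψ G x 0 1) * hdet F x
  -- trace identity
  have htr : ∀ F G : ℝ, (Ψ G 1).trace = (Ψ F 1).trace
      + (F - G) * (-(Ψ F 1 0 0) * (∫ s in (0:ℝ)..1, ε s * (Ψ F s 0 1 * Ψ G s 0 0))
        - Ψ F 1 1 0 * (∫ s in (0:ℝ)..1, ε s * (Ψ F s 0 1 * Ψ G s 0 1))
        + Ψ F 1 0 1 * (∫ s in (0:ℝ)..1, ε s * (Ψ F s 0 0 * Ψ G s 0 0))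
        + Ψ F 1 1 1 * (∫ s in (0:ℝ)..1, ε s * (Ψ F s 0 0 * Ψ G s 0 1))) := by
    intro F G
    rw [Matrix.trace_fin_two, Matrix.trace_fin_two]
    linear_combination (Ψ F 1 0 0) * hW1 F G 1 + (Ψ F 1 0 1) * hW3 F G 1
      + (Ψ F 1 1 0) * hW2 F G 1 + (Ψ F 1 1 1) * hW4 F G 1
      - (Ψ G 1 0 0 + Ψ G 1 1 1) * hdet F 1
  -- uniform bounds
  obtain ⟨Cε, hCε0, hCε⟩ : ∃ C : ℝ, 0 ≤ C ∧ ∀ s ∈ Icc (0:ℝ) 1, |ε s| ≤ C := by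
    obtain ⟨C, hC⟩ := isCompact_Icc.exists_bound_of_continuousOn
      (hεc.continuousOn (s := Icc (0:ℝ) 1))
    exact ⟨max C 0, le_max_right _ _, fun s hs => (hC s hs).trans (le_max_left _ _)⟩
  obtain ⟨Cμ, hCμ0, hCμ⟩ : ∃ C : ℝ, 0 ≤ C ∧ ∀ s ∈ Icc (0:ℝ) 1, |μ s| ≤ C := by
    obtain ⟨C, hC⟩ := isCompact_Icc.exists_bound_of_continuousOn
      (hμc.continuousOn (s := Icc (0:ℝ) 1))
    exact ⟨max C 0, le_max_right _ _, fun s hs => (hC s hs).trans (le_max_left _ _)⟩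
  obtain ⟨C₀, hC₀pos, hbd⟩ : ∃ C₀ : ℝ, 0 < C₀ ∧ ∀ E ∈ Icc (Estar - 1) (Estar + 1),
      ∀ x ∈ Icc (0:ℝ) 1, ∀ i j : Fin 2, |Ψ E x i j| ≤ C₀ := by
    refine ⟨Real.sqrt (2 * Real.exp (Cμ + (|Estar| + 1) * Cε)),
      Real.sqrt_pos.2 (by positivity), ?_⟩
    intro E hE x hx i j
    have hEabs : |E| ≤ |Estar| + 1 := by
      rw [abs_le]
      constructor
      · linarith [hE.1, neg_abs_le Estar]
      · linarith [hE.2, le_abs_self Estar]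
    have h := aux_entry_bound (fun t => Ψ E t 0 0) (fun t => Ψ E t 0 1) (fun t => Ψ E t 1 0)
      (fun t => Ψ E t 1 1) μ (fun t => -E * ε t) (Cμ + (|Estar| + 1) * Cε) (by positivity)
      (hD00 E) (hD01 E) (hD10 E) (hD11 E) ?_
      (h0 E).1 (h0 E).2.1 (h0 E).2.2.1 (h0 E).2.2.2 x hx
    · fin_cases i <;> fin_cases j
      · exact h.1
      · exact h.2.1
      · exact h.2.2.1
      · exact h.2.2.2
    · intro t ht
      have he : |-E * ε t| = |E| * |ε t| := by rw [abs_mul, abs_neg]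
      rw [he]
      have h1 := hCμ t ht
      have h2 : |E| * |ε t| ≤ (|Estar| + 1) * Cε :=
        mul_le_mul hEabs (hCε t ht) (abs_nonneg _) (by positivity)
      linarith
  have hEstarS : Estar ∈ Icc (Estar - 1) (Estar + 1) := by constructor <;> linarith
  have h1I : (1:ℝ) ∈ Icc (0:ℝ) 1 := ⟨zero_le_one, le_refl 1⟩
  -- congruence of interval integrals
  have hcg : ∀ f g : ℝ → ℝ, (∀ s, f s = g s) → (∫ s in (0:ℝ)..1, f s) = ∫ s in (0:ℝ)..1, g s :=
    fun f g h => intervalIntegral.integral_congr fun s _ => h s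
  -- basic integral bound
  have hIb : ∀ (f : ℝ → ℝ) (M : ℝ), 0 ≤ M → (∀ s ∈ Icc (0:ℝ) 1, |f s| ≤ M) →
      ∀ x ∈ Icc (0:ℝ) 1, |∫ s in (0:ℝ)..x, ε s * f s| ≤ Cε * M := by
    intro f M hM hfM x hx
    have hb := intervalIntegral.norm_integral_le_of_norm_le_const (C := Cε * M)
      (f := fun s => ε s * f s) (a := 0) (b := x) ?_
    · rw [Real.norm_eq_abs] at hb
      refine hb.trans ?_
      rw [sub_zero, abs_of_nonneg hx.1]
      nlinarith [hx.2, mul_nonneg hCε0 hM]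
    · intro s hs
      rw [Set.uIoc_of_le hx.1] at hs
      have hs' : s ∈ Icc (0:ℝ) 1 := ⟨hs.1.le, hs.2.trans hx.2⟩
      rw [Real.norm_eq_abs, abs_mul]
      exact mul_le_mul (hCε s hs') (hfM s hs') (abs_nonneg _) hCε0
  -- bound on product integrals
  have hprodbd : ∀ F ∈ Icc (Estar - 1) (Estar + 1), ∀ G ∈ Icc (Estar - 1) (Estar + 1),
      ∀ j k : Fin 2, |∫ s in (0:ℝ)..1, ε s * (Ψ F s 0 j * Ψ G s 0 k)| ≤ Cε * (C₀ * C₀) := by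
    intro F hF G hG j k
    refine hIb _ _ (by positivity) ?_ 1 h1I
    intro s hs
    rw [abs_mul]
    exact mul_le_mul (hbd F hF s hs 0 j) (hbd G hG s hs 0 k) (abs_nonneg _) hC₀pos.le
  -- Lipschitz continuity of first-row entries in the parameter
  have hLip : ∀ F ∈ Icc (Estar - 1) (Estar + 1), ∀ G ∈ Icc (Estar - 1) (Estar + 1),
      ∀ x ∈ Icc (0:ℝ) 1, ∀ k : Fin 2,
      |Ψ G x 0 k - Ψ F x 0 k| ≤ 2 * Cε * C₀ ^ 3 * |G - F| := by
    intro F hF G hG x hx k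
    have hIbd : ∀ j k' : Fin 2, |∫ s in (0:ℝ)..x, ε s * (Ψ F s 0 j * Ψ G s 0 k')|
        ≤ Cε * (C₀ * C₀) := by
      intro j k'
      refine hIb _ _ (by positivity) ?_ x hx
      intro s hs
      rw [abs_mul]
      exact mul_le_mul (hbd F hF s hs 0 j) (hbd G hG s hs 0 k') (abs_nonneg _) hC₀pos.le
    have key : ∀ (I3 I1 : ℝ), |I3| ≤ Cε * (C₀ * C₀) → |I1| ≤ Cε * (C₀ * C₀) →
        |(F - G) * (Ψ F x 0 1 * I3 - Ψ F x 0 0 * I1)| ≤ 2 * Cε * C₀ ^ 3 * |G - F| := by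
      intro I3 I1 h3 h1
      rw [abs_mul, abs_sub_comm F G]
      have hb1 := hbd F hF x hx 0 1
      have hb0 := hbd F hF x hx 0 0
      have : |Ψ F x 0 1 * I3 - Ψ F x 0 0 * I1| ≤ 2 * Cε * C₀ ^ 3 := by
        refine (abs_sub _ _).trans ?_
        rw [abs_mul, abs_mul]
        nlinarith [abs_nonneg I3, abs_nonneg I1, abs_nonneg (Ψ F x 0 1), abs_nonneg (Ψ F x 0 0),
          mul_le_mul hb1 h3 (abs_nonneg _) hC₀pos.le, mul_le_mul hb0 h1 (abs_nonneg _) hC₀pos.le]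
      calc |G - F| * |Ψ F x 0 1 * I3 - Ψ F x 0 0 * I1| ≤ |G - F| * (2 * Cε * C₀ ^ 3) :=
            mul_le_mul_of_nonneg_left this (abs_nonneg _)
        _ = 2 * Cε * C₀ ^ 3 * |G - F| := by ring
    fin_cases k
    · show |Ψ G x 0 0 - Ψ F x 0 0| ≤ 2 * Cε * C₀ ^ 3 * |G - F|
      rw [show Ψ G x 0 0 - Ψ F x 0 0 = (F - G) * (Ψ F x 0 1
        * (∫ s in (0:ℝ)..x, ε s * (Ψ F s 0 0 * Ψ G s 0 0))
        - Ψ F x 0 0 * (∫ s in (0:ℝ)..x, ε s * (Ψ F s 0 1 * Ψ G s 0 0))) from by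
          linear_combination hrow0 F G x]
      exact key _ _ (hIbd 0 0) (hIbd 1 0)
    · show |Ψ G x 0 1 - Ψ F x 0 1| ≤ 2 * Cε * C₀ ^ 3 * |G - F|
      rw [show Ψ G x 0 1 - Ψ F x 0 1 = (F - G) * (Ψ F x 0 1
        * (∫ s in (0:ℝ)..x, ε s * (Ψ F s 0 0 * Ψ G s 0 1))
        - Ψ F x 0 0 * (∫ s in (0:ℝ)..x, ε s * (Ψ F s 0 1 * Ψ G s 0 1))) from by
          linear_combination hrow1 F G x]
      exact key _ _ (hIbd 0 1) (hIbd 1 1)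
  -- difference bound: second factor varies
  have hdiffbd : ∀ W ∈ Icc (Estar - 1) (Estar + 1), ∀ F ∈ Icc (Estar - 1) (Estar + 1),
      ∀ G ∈ Icc (Estar - 1) (Estar + 1), ∀ j k : Fin 2,
      |(∫ s in (0:ℝ)..1, ε s * (Ψ W s 0 j * Ψ G s 0 k))
        - ∫ s in (0:ℝ)..1, ε s * (Ψ W s 0 j * Ψ F s 0 k)|
        ≤ Cε * (C₀ * (2 * Cε * C₀ ^ 3)) * |G - F| := by
    intro W hW F hF G hG j k
    have hint1 : IntervalIntegrable (fun s => ε s * (Ψ W s 0 j * Ψ G s 0 k))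
        MeasureTheory.volume 0 1 :=
      (hεc.mul ((hcont W 0 j).mul (hcont G 0 k))).intervalIntegrable 0 1
    have hint2 : IntervalIntegrable (fun s => ε s * (Ψ W s 0 j * Ψ F s 0 k))
        MeasureTheory.volume 0 1 :=
      (hεc.mul ((hcont W 0 j).mul (hcont F 0 k))).intervalIntegrable 0 1
    rw [← intervalIntegral.integral_sub hint1 hint2]
    rw [hcg _ (fun s => ε s * (Ψ W s 0 j * (Ψ G s 0 k - Ψ F s 0 k))) (fun s => by ring)]
    have hb := hIb (fun s => Ψ W s 0 j * (Ψ G s 0 k - Ψ F s 0 k))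
      (C₀ * (2 * Cε * C₀ ^ 3 * |G - F|)) (by positivity) ?_ 1 h1I
    · refine hb.trans (le_of_eq (by ring))
    · intro s hs
      rw [abs_mul]
      exact mul_le_mul (hbd W hW s hs 0 j) (hLip F hF G hG s hs k) (abs_nonneg _) hC₀pos.le
  -- difference bound: both factors vary (comparison with Estar)
  have hdiffbd2 : ∀ F ∈ Icc (Estar - 1) (Estar + 1), ∀ j k : Fin 2,
      |(∫ s in (0:ℝ)..1, ε s * (Ψ F s 0 j * Ψ F s 0 k))
        - ∫ s in (0:ℝ)..1, ε s * (Ψ Estar s 0 j * Ψ Estar s 0 k)|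
        ≤ 2 * (Cε * (C₀ * (2 * Cε * C₀ ^ 3))) * |F - Estar| := by
    intro F hF j k
    have hint1 : IntervalIntegrable (fun s => ε s * (Ψ F s 0 j * Ψ F s 0 k))
        MeasureTheory.volume 0 1 :=
      (hεc.mul ((hcont F 0 j).mul (hcont F 0 k))).intervalIntegrable 0 1
    have hint2 : IntervalIntegrable (fun s => ε s * (Ψ Estar s 0 j * Ψ Estar s 0 k))
        MeasureTheory.volume 0 1 :=
      (hεc.mul ((hcont Estar 0 j).mul (hcont Estar 0 k))).intervalIntegrable 0 1
    rw [← intervalIntegral.integral_sub hint1 hint2]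
    rw [hcg _ (fun s => ε s * (Ψ F s 0 j * (Ψ F s 0 k - Ψ Estar s 0 k)
      + Ψ Estar s 0 k * (Ψ F s 0 j - Ψ Estar s 0 j))) (fun s => by ring)]
    have hb := hIb (fun s => Ψ F s 0 j * (Ψ F s 0 k - Ψ Estar s 0 k)
        + Ψ Estar s 0 k * (Ψ F s 0 j - Ψ Estar s 0 j))
      (2 * (C₀ * (2 * Cε * C₀ ^ 3 * |F - Estar|))) (by positivity) ?_ 1 h1I
    · refine hb.trans (le_of_eq (by ring))
    · intro s hs
      refine (abs_add_le _ _).trans ?_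
      rw [abs_mul, abs_mul]
      have h1 := mul_le_mul (hbd F hF s hs 0 j) (hLip Estar hEstarS F hF s hs k)
        (abs_nonneg _) hC₀pos.le
      have h2 := mul_le_mul (hbd Estar hEstarS s hs 0 k) (hLip Estar hEstarS F hF s hs j)
        (abs_nonneg _) hC₀pos.le
      linarith
  -- the derivative of the discriminant near Estar
  have main1 : ∀ F : ℝ, |F - Estar| < 1 → HasDerivAt (fun t => (Ψ t 1).trace)
      ((F - Estar) * ((∫ s in (0:ℝ)..1, ε s * (Ψ Estar s 0 1 * Ψ F s 0 0))
          * (∫ s in (0:ℝ)..1, ε s * (Ψ F s 0 0 * Ψ F s 0 1))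
        - (∫ s in (0:ℝ)..1, ε s * (Ψ Estar s 0 0 * Ψ F s 0 0))
          * (∫ s in (0:ℝ)..1, ε s * (Ψ F s 0 1 * Ψ F s 0 1))
        - (∫ s in (0:ℝ)..1, ε s * (Ψ Estar s 0 1 * Ψ F s 0 1))
          * (∫ s in (0:ℝ)..1, ε s * (Ψ F s 0 0 * Ψ F s 0 0))
        + (∫ s in (0:ℝ)..1, ε s * (Ψ Estar s 0 0 * Ψ F s 0 1))
          * (∫ s in (0:ℝ)..1, ε s * (Ψ F s 0 0 * Ψ F s 0 1)))) F := by
    intro F hFlt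
    have hFlt' := abs_lt.1 hFlt
    have hFS : F ∈ Icc (Estar - 1) (Estar + 1) := by
      constructor <;> linarith [hFlt'.1, hFlt'.2]
    have hda : HasDerivAt (fun t => (Ψ t 1).trace)
        (Ψ F 1 0 0 * (∫ s in (0:ℝ)..1, ε s * (Ψ F s 0 1 * Ψ F s 0 0))
         + Ψ F 1 1 0 * (∫ s in (0:ℝ)..1, ε s * (Ψ F s 0 1 * Ψ F s 0 1))
         - Ψ F 1 0 1 * (∫ s in (0:ℝ)..1, ε s * (Ψ F s 0 0 * Ψ F s 0 0))
         - Ψ F 1 1 1 * (∫ s in (0:ℝ)..1, ε s * (Ψ F s 0 0 * Ψ F s 0 1))) F := by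
      rw [hasDerivAt_iff_tendsto_slope, ← tendsto_sub_nhds_zero_iff]
      have hlim : Filter.Tendsto (fun G : ℝ => 4 * C₀ * (Cε * (C₀ * (2 * Cε * C₀ ^ 3))) * |G - F|)
          (nhdsWithin F {F}ᶜ) (nhds 0) := by
        have h1 : Filter.Tendsto (fun G : ℝ => |G - F|) (nhds F) (nhds 0) := by
          have h2 := (continuous_id.sub (continuous_const (y := F))).abs.tendsto F
          simpa using h2
        have h3 := h1.const_mul (4 * C₀ * (Cε * (C₀ * (2 * Cε * C₀ ^ 3))))
        rw [mul_zero] at h3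
        exact h3.mono_left nhdsWithin_le_nhds
      refine squeeze_zero_norm' ?_ hlim
      have hSev : ∀ᶠ G in nhdsWithin F {F}ᶜ, G ∈ Icc (Estar - 1) (Estar + 1) := by
        refine eventually_nhdsWithin_of_eventually_nhds ?_
        refine Filter.eventually_of_mem (Icc_mem_nhds (by linarith [hFlt'.1]) (by linarith [hFlt'.2]))
          fun y hy => hy
      filter_upwards [hSev, eventually_mem_nhdsWithin] with G hGS hGne'
      have hGne : G ≠ F := hGne'
      have hGF : G - F ≠ 0 := sub_ne_zero.2 hGne
      have hslope : slope (fun t => (Ψ t 1).trace) F G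
          = Ψ F 1 0 0 * (∫ s in (0:ℝ)..1, ε s * (Ψ F s 0 1 * Ψ G s 0 0))
            + Ψ F 1 1 0 * (∫ s in (0:ℝ)..1, ε s * (Ψ F s 0 1 * Ψ G s 0 1))
            - Ψ F 1 0 1 * (∫ s in (0:ℝ)..1, ε s * (Ψ F s 0 0 * Ψ G s 0 0))
            - Ψ F 1 1 1 * (∫ s in (0:ℝ)..1, ε s * (Ψ F s 0 0 * Ψ G s 0 1)) := by
        rw [slope_def_field, htr F G]
        field_simp
        ring
      have hA := hdiffbd F hFS F hFS G hGS 1 0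
      have hB := hdiffbd F hFS F hFS G hGS 1 1
      have hC := hdiffbd F hFS F hFS G hGS 0 0
      have hD := hdiffbd F hFS F hFS G hGS 0 1
      have hb00 := hbd F hFS 1 h1I 0 0
      have hb01 := hbd F hFS 1 h1I 0 1
      have hb10 := hbd F hFS 1 h1I 1 0
      have hb11 := hbd F hFS 1 h1I 1 1
      have heq : slope (fun t => (Ψ t 1).trace) F G
          - (Ψ F 1 0 0 * (∫ s in (0:ℝ)..1, ε s * (Ψ F s 0 1 * Ψ F s 0 0))
            + Ψ F 1 1 0 * (∫ s in (0:ℝ)..1, ε s * (Ψ F s 0 1 * Ψ F s 0 1))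
            - Ψ F 1 0 1 * (∫ s in (0:ℝ)..1, ε s * (Ψ F s 0 0 * Ψ F s 0 0))
            - Ψ F 1 1 1 * (∫ s in (0:ℝ)..1, ε s * (Ψ F s 0 0 * Ψ F s 0 1)))
          = Ψ F 1 0 0 * ((∫ s in (0:ℝ)..1, ε s * (Ψ F s 0 1 * Ψ G s 0 0))
              - ∫ s in (0:ℝ)..1, ε s * (Ψ F s 0 1 * Ψ F s 0 0))
            + Ψ F 1 1 0 * ((∫ s in (0:ℝ)..1, ε s * (Ψ F s 0 1 * Ψ G s 0 1))
              - ∫ s in (0:ℝ)..1, ε s * (Ψ F s 0 1 * Ψ F s 0 1))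
            - Ψ F 1 0 1 * ((∫ s in (0:ℝ)..1, ε s * (Ψ F s 0 0 * Ψ G s 0 0))
              - ∫ s in (0:ℝ)..1, ε s * (Ψ F s 0 0 * Ψ F s 0 0))
            - Ψ F 1 1 1 * ((∫ s in (0:ℝ)..1, ε s * (Ψ F s 0 0 * Ψ G s 0 1))
              - ∫ s in (0:ℝ)..1, ε s * (Ψ F s 0 0 * Ψ F s 0 1)) := by
        rw [hslope]; ring
      rw [Real.norm_eq_abs, heq]
      refine (aux_abs4 _ _ _ _).trans ?_
      rw [abs_mul, abs_mul, abs_mul, abs_mul]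
      have t1 := mul_le_mul hb00 hA (abs_nonneg _) hC₀pos.le
      have t2 := mul_le_mul hb10 hB (abs_nonneg _) hC₀pos.le
      have t3 := mul_le_mul hb01 hC (abs_nonneg _) hC₀pos.le
      have t4 := mul_le_mul hb11 hD (abs_nonneg _) hC₀pos.le
      nlinarith [abs_nonneg (G - F), mul_nonneg (mul_nonneg hCε0 hC₀pos.le) hC₀pos.le]
    have hval : Ψ F 1 0 0 * (∫ s in (0:ℝ)..1, ε s * (Ψ F s 0 1 * Ψ F s 0 0))
         + Ψ F 1 1 0 * (∫ s in (0:ℝ)..1, ε s * (Ψ F s 0 1 * Ψ F s 0 1))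
         - Ψ F 1 0 1 * (∫ s in (0:ℝ)..1, ε s * (Ψ F s 0 0 * Ψ F s 0 0))
         - Ψ F 1 1 1 * (∫ s in (0:ℝ)..1, ε s * (Ψ F s 0 0 * Ψ F s 0 1))
        = (F - Estar) * ((∫ s in (0:ℝ)..1, ε s * (Ψ Estar s 0 1 * Ψ F s 0 0))
          * (∫ s in (0:ℝ)..1, ε s * (Ψ F s 0 0 * Ψ F s 0 1))
        - (∫ s in (0:ℝ)..1, ε s * (Ψ Estar s 0 0 * Ψ F s 0 0))
          * (∫ s in (0:ℝ)..1, ε s * (Ψ F s 0 1 * Ψ F s 0 1))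
        - (∫ s in (0:ℝ)..1, ε s * (Ψ Estar s 0 1 * Ψ F s 0 1))
          * (∫ s in (0:ℝ)..1, ε s * (Ψ F s 0 0 * Ψ F s 0 0))
        + (∫ s in (0:ℝ)..1, ε s * (Ψ Estar s 0 0 * Ψ F s 0 1))
          * (∫ s in (0:ℝ)..1, ε s * (Ψ F s 0 0 * Ψ F s 0 1))) := by
      have hfl : (∫ s in (0:ℝ)..1, ε s * (Ψ F s 0 1 * Ψ F s 0 0))
          = ∫ s in (0:ℝ)..1, ε s * (Ψ F s 0 0 * Ψ F s 0 1) := hcg _ _ (fun s => by ring)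
      have ea : Ψ F 1 0 0
          = 1 - (Estar - F) * ∫ s in (0:ℝ)..1, ε s * (Ψ Estar s 0 1 * Ψ F s 0 0) := by
        have h := hW1 Estar F 1; rw [hd1.2.2.2, hd1.2.1] at h; linarith
      have eb : Ψ F 1 0 1
          = -((Estar - F) * ∫ s in (0:ℝ)..1, ε s * (Ψ Estar s 0 1 * Ψ F s 0 1)) := by
        have h := hW2 Estar F 1; rw [hd1.2.2.2, hd1.2.1] at h; linarith
      have ec : Ψ F 1 1 0
          = (Estar - F) * ∫ s in (0:ℝ)..1, ε s * (Ψ Estar s 0 0 * Ψ F s 0 0) := by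
        have h := hW3 Estar F 1; rw [hd1.2.2.1, hd1.1] at h; linarith
      have ed : Ψ F 1 1 1
          = 1 + (Estar - F) * ∫ s in (0:ℝ)..1, ε s * (Ψ Estar s 0 0 * Ψ F s 0 1) := by
        have h := hW4 Estar F 1; rw [hd1.2.2.1, hd1.1] at h; linarith
      rw [hfl, ea, eb, ec, ed]; ring
    exact hval ▸ hda
  -- second derivative at Estar
  have hga : (∫ s in (0:ℝ)..1, ε s * (Ψ Estar s 0 1 * Ψ Estar s 0 0))
          * (∫ s in (0:ℝ)..1, ε s * (Ψ Estar s 0 0 * Ψ Estar s 0 1))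
        - (∫ s in (0:ℝ)..1, ε s * (Ψ Estar s 0 0 * Ψ Estar s 0 0))
          * (∫ s in (0:ℝ)..1, ε s * (Ψ Estar s 0 1 * Ψ Estar s 0 1))
        - (∫ s in (0:ℝ)..1, ε s * (Ψ Estar s 0 1 * Ψ Estar s 0 1))
          * (∫ s in (0:ℝ)..1, ε s * (Ψ Estar s 0 0 * Ψ Estar s 0 0))
        + (∫ s in (0:ℝ)..1, ε s * (Ψ Estar s 0 0 * Ψ Estar s 0 1))
          * (∫ s in (0:ℝ)..1, ε s * (Ψ Estar s 0 0 * Ψ Estar s 0 1)) = a := by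
    have c1 : (∫ x in (0:ℝ)..1, ε x * Ψ Estar x 0 0 * Ψ Estar x 0 1)
        = ∫ s in (0:ℝ)..1, ε s * (Ψ Estar s 0 0 * Ψ Estar s 0 1) := hcg _ _ (fun s => by ring)
    have c2 : (∫ x in (0:ℝ)..1, ε x * (Ψ Estar x 0 0) ^ 2)
        = ∫ s in (0:ℝ)..1, ε s * (Ψ Estar s 0 0 * Ψ Estar s 0 0) := hcg _ _ (fun s => by ring)
    have c3 : (∫ x in (0:ℝ)..1, ε x * (Ψ Estar x 0 1) ^ 2)
        = ∫ s in (0:ℝ)..1, ε s * (Ψ Estar s 0 1 * Ψ Estar s 0 1) := hcg _ _ (fun s => by ring)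
    have c4 : (∫ s in (0:ℝ)..1, ε s * (Ψ Estar s 0 1 * Ψ Estar s 0 0))
        = ∫ s in (0:ℝ)..1, ε s * (Ψ Estar s 0 0 * Ψ Estar s 0 1) := hcg _ _ (fun s => by ring)
    rw [ha, c1, c2, c3, c4]; ring
  have main2 : HasDerivAt (fun F : ℝ => (F - Estar)
      * ((∫ s in (0:ℝ)..1, ε s * (Ψ Estar s 0 1 * Ψ F s 0 0))
          * (∫ s in (0:ℝ)..1, ε s * (Ψ F s 0 0 * Ψ F s 0 1))
        - (∫ s in (0:ℝ)..1, ε s * (Ψ Estar s 0 0 * Ψ F s 0 0))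
          * (∫ s in (0:ℝ)..1, ε s * (Ψ F s 0 1 * Ψ F s 0 1))
        - (∫ s in (0:ℝ)..1, ε s * (Ψ Estar s 0 1 * Ψ F s 0 1))
          * (∫ s in (0:ℝ)..1, ε s * (Ψ F s 0 0 * Ψ F s 0 0))
        + (∫ s in (0:ℝ)..1, ε s * (Ψ Estar s 0 0 * Ψ F s 0 1))
          * (∫ s in (0:ℝ)..1, ε s * (Ψ F s 0 0 * Ψ F s 0 1)))) a Estar := by
    rw [hasDerivAt_iff_tendsto_slope, ← tendsto_sub_nhds_zero_iff]
    have hlim : Filter.Tendsto (fun F : ℝ =>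
        12 * (Cε * (C₀ * C₀)) * (Cε * (C₀ * (2 * Cε * C₀ ^ 3))) * |F - Estar|)
        (nhdsWithin Estar {Estar}ᶜ) (nhds 0) := by
      have h1 : Filter.Tendsto (fun F : ℝ => |F - Estar|) (nhds Estar) (nhds 0) := by
        have h2 := (continuous_id.sub (continuous_const (y := Estar))).abs.tendsto Estar
        simpa using h2
      have h3 := h1.const_mul (12 * (Cε * (C₀ * C₀)) * (Cε * (C₀ * (2 * Cε * C₀ ^ 3))))
      rw [mul_zero] at h3
      exact h3.mono_left nhdsWithin_le_nhds
    refine squeeze_zero_norm' ?_ hlim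
    have hSev : ∀ᶠ F in nhdsWithin Estar {Estar}ᶜ, F ∈ Icc (Estar - 1) (Estar + 1) := by
      refine eventually_nhdsWithin_of_eventually_nhds ?_
      refine Filter.eventually_of_mem (Icc_mem_nhds (by linarith) (by linarith)) fun y hy => hy
    filter_upwards [hSev, eventually_mem_nhdsWithin] with F hFS hFne'
    have hFne : F ≠ Estar := hFne'
    have hFE : F - Estar ≠ 0 := sub_ne_zero.2 hFne
    have hslope : slope (fun F : ℝ => (F - Estar)
        * ((∫ s in (0:ℝ)..1, ε s * (Ψ Estar s 0 1 * Ψ F s 0 0))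
            * (∫ s in (0:ℝ)..1, ε s * (Ψ F s 0 0 * Ψ F s 0 1))
          - (∫ s in (0:ℝ)..1, ε s * (Ψ Estar s 0 0 * Ψ F s 0 0))
            * (∫ s in (0:ℝ)..1, ε s * (Ψ F s 0 1 * Ψ F s 0 1))
          - (∫ s in (0:ℝ)..1, ε s * (Ψ Estar s 0 1 * Ψ F s 0 1))
            * (∫ s in (0:ℝ)..1, ε s * (Ψ F s 0 0 * Ψ F s 0 0))
          + (∫ s in (0:ℝ)..1, ε s * (Ψ Estar s 0 0 * Ψ F s 0 1))
            * (∫ s in (0:ℝ)..1, ε s * (Ψ F s 0 0 * Ψ F s 0 1)))) Estar F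
        = (∫ s in (0:ℝ)..1, ε s * (Ψ Estar s 0 1 * Ψ F s 0 0))
            * (∫ s in (0:ℝ)..1, ε s * (Ψ F s 0 0 * Ψ F s 0 1))
          - (∫ s in (0:ℝ)..1, ε s * (Ψ Estar s 0 0 * Ψ F s 0 0))
            * (∫ s in (0:ℝ)..1, ε s * (Ψ F s 0 1 * Ψ F s 0 1))
          - (∫ s in (0:ℝ)..1, ε s * (Ψ Estar s 0 1 * Ψ F s 0 1))
            * (∫ s in (0:ℝ)..1, ε s * (Ψ F s 0 0 * Ψ F s 0 0))
          + (∫ s in (0:ℝ)..1, ε s * (Ψ Estar s 0 0 * Ψ F s 0 1))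
            * (∫ s in (0:ℝ)..1, ε s * (Ψ F s 0 0 * Ψ F s 0 1)) := by
      rw [slope_def_field]
      field_simp
      ring
    rw [Real.norm_eq_abs, hslope, ← hga]
    have hB1 := hprodbd Estar hEstarS F hFS 1 0
    have hB2 := hprodbd Estar hEstarS F hFS 0 0
    have hB3 := hprodbd Estar hEstarS F hFS 1 1
    have hB4 := hprodbd Estar hEstarS F hFS 0 1
    have hBq := hprodbd Estar hEstarS Estar hEstarS 0 1
    have hBp := hprodbd Estar hEstarS Estar hEstarS 0 0
    have hBr := hprodbd Estar hEstarS Estar hEstarS 1 1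
    have hd1' := hdiffbd Estar hEstarS Estar hEstarS F hFS 1 0
    have hd2' := hdiffbd Estar hEstarS Estar hEstarS F hFS 0 0
    have hd3' := hdiffbd Estar hEstarS Estar hEstarS F hFS 1 1
    have hd4' := hdiffbd Estar hEstarS Estar hEstarS F hFS 0 1
    have he1 := hdiffbd2 F hFS 0 1
    have he2 := hdiffbd2 F hFS 1 1
    have he3 := hdiffbd2 F hFS 0 0
    have hp1 := aux_prod_diff _ _ _ _ (Cε * (C₀ * C₀))
      (Cε * (C₀ * (2 * Cε * C₀ ^ 3)) * |F - Estar|)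
      (2 * (Cε * (C₀ * (2 * Cε * C₀ ^ 3))) * |F - Estar|) hB1 hBq hd1' he1
    have hp2 := aux_prod_diff _ _ _ _ (Cε * (C₀ * C₀))
      (Cε * (C₀ * (2 * Cε * C₀ ^ 3)) * |F - Estar|)
      (2 * (Cε * (C₀ * (2 * Cε * C₀ ^ 3))) * |F - Estar|) hB2 hBr hd2' he2
    have hp3 := aux_prod_diff _ _ _ _ (Cε * (C₀ * C₀))
      (Cε * (C₀ * (2 * Cε * C₀ ^ 3)) * |F - Estar|)
      (2 * (Cε * (C₀ * (2 * Cε * C₀ ^ 3))) * |F - Estar|) hB3 hBp hd3' he3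
    have hp4 := aux_prod_diff _ _ _ _ (Cε * (C₀ * C₀))
      (Cε * (C₀ * (2 * Cε * C₀ ^ 3)) * |F - Estar|)
      (2 * (Cε * (C₀ * (2 * Cε * C₀ ^ 3))) * |F - Estar|) hB4 hBq hd4' he1
    have hrw : (∫ s in (0:ℝ)..1, ε s * (Ψ Estar s 0 1 * Ψ F s 0 0))
            * (∫ s in (0:ℝ)..1, ε s * (Ψ F s 0 0 * Ψ F s 0 1))
          - (∫ s in (0:ℝ)..1, ε s * (Ψ Estar s 0 0 * Ψ F s 0 0))
            * (∫ s in (0:ℝ)..1, ε s * (Ψ F s 0 1 * Ψ F s 0 1))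
          - (∫ s in (0:ℝ)..1, ε s * (Ψ Estar s 0 1 * Ψ F s 0 1))
            * (∫ s in (0:ℝ)..1, ε s * (Ψ F s 0 0 * Ψ F s 0 0))
          + (∫ s in (0:ℝ)..1, ε s * (Ψ Estar s 0 0 * Ψ F s 0 1))
            * (∫ s in (0:ℝ)..1, ε s * (Ψ F s 0 0 * Ψ F s 0 1))
        - ((∫ s in (0:ℝ)..1, ε s * (Ψ Estar s 0 1 * Ψ Estar s 0 0))
            * (∫ s in (0:ℝ)..1, ε s * (Ψ Estar s 0 0 * Ψ Estar s 0 1))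
          - (∫ s in (0:ℝ)..1, ε s * (Ψ Estar s 0 0 * Ψ Estar s 0 0))
            * (∫ s in (0:ℝ)..1, ε s * (Ψ Estar s 0 1 * Ψ Estar s 0 1))
          - (∫ s in (0:ℝ)..1, ε s * (Ψ Estar s 0 1 * Ψ Estar s 0 1))
            * (∫ s in (0:ℝ)..1, ε s * (Ψ Estar s 0 0 * Ψ Estar s 0 0))
          + (∫ s in (0:ℝ)..1, ε s * (Ψ Estar s 0 0 * Ψ Estar s 0 1))
            * (∫ s in (0:ℝ)..1, ε s * (Ψ Estar s 0 0 * Ψ Estar s 0 1)))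
        = ((∫ s in (0:ℝ)..1, ε s * (Ψ Estar s 0 1 * Ψ F s 0 0))
            * (∫ s in (0:ℝ)..1, ε s * (Ψ F s 0 0 * Ψ F s 0 1))
          - (∫ s in (0:ℝ)..1, ε s * (Ψ Estar s 0 1 * Ψ Estar s 0 0))
            * (∫ s in (0:ℝ)..1, ε s * (Ψ Estar s 0 0 * Ψ Estar s 0 1)))
          + ((∫ s in (0:ℝ)..1, ε s * (Ψ Estar s 0 0 * Ψ F s 0 1))
            * (∫ s in (0:ℝ)..1, ε s * (Ψ F s 0 0 * Ψ F s 0 1))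
          - (∫ s in (0:ℝ)..1, ε s * (Ψ Estar s 0 0 * Ψ Estar s 0 1))
            * (∫ s in (0:ℝ)..1, ε s * (Ψ Estar s 0 0 * Ψ Estar s 0 1)))
          - ((∫ s in (0:ℝ)..1, ε s * (Ψ Estar s 0 0 * Ψ F s 0 0))
            * (∫ s in (0:ℝ)..1, ε s * (Ψ F s 0 1 * Ψ F s 0 1))
          - (∫ s in (0:ℝ)..1, ε s * (Ψ Estar s 0 0 * Ψ Estar s 0 0))
            * (∫ s in (0:ℝ)..1, ε s * (Ψ Estar s 0 1 * Ψ Estar s 0 1)))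
          - ((∫ s in (0:ℝ)..1, ε s * (Ψ Estar s 0 1 * Ψ F s 0 1))
            * (∫ s in (0:ℝ)..1, ε s * (Ψ F s 0 0 * Ψ F s 0 0))
          - (∫ s in (0:ℝ)..1, ε s * (Ψ Estar s 0 1 * Ψ Estar s 0 1))
            * (∫ s in (0:ℝ)..1, ε s * (Ψ Estar s 0 0 * Ψ Estar s 0 0))) := by ring
    rw [hrw]
    refine (aux_abs4 _ _ _ _).trans ?_
    nlinarith [abs_nonneg (F - Estar), hp1, hp2, hp3, hp4]
  refine ⟨⟨fun F : ℝ => (F - Estar)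
      * ((∫ s in (0:ℝ)..1, ε s * (Ψ Estar s 0 1 * Ψ F s 0 0))
          * (∫ s in (0:ℝ)..1, ε s * (Ψ F s 0 0 * Ψ F s 0 1))
        - (∫ s in (0:ℝ)..1, ε s * (Ψ Estar s 0 0 * Ψ F s 0 0))
          * (∫ s in (0:ℝ)..1, ε s * (Ψ F s 0 1 * Ψ F s 0 1))
        - (∫ s in (0:ℝ)..1, ε s * (Ψ Estar s 0 1 * Ψ F s 0 1))
          * (∫ s in (0:ℝ)..1, ε s * (Ψ F s 0 0 * Ψ F s 0 0))
        + (∫ s in (0:ℝ)..1, ε s * (Ψ Estar s 0 0 * Ψ F s 0 1))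
          * (∫ s in (0:ℝ)..1, ε s * (Ψ F s 0 0 * Ψ F s 0 1))), ?_, main2⟩, ?_⟩
  · have hball : ∀ᶠ F in nhds Estar, |F - Estar| < 1 := by
      filter_upwards [Metric.ball_mem_nhds Estar one_pos] with F hF
      simpa [Real.dist_eq] using hF
    filter_upwards [hball] with F hF
    exact main1 F hF
  -- strict negativity
  · obtain ⟨y, hy01, hy2pos⟩ : ∃ y, y ∈ Ioo (0:ℝ) 1 ∧ 0 < Ψ Estar y 0 1 := by
      have hsl := hD01 Estar 0
      rw [(h0 Estar).2.2.2] at hsl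
      rw [hasDerivAt_iff_tendsto_slope] at hsl
      have hpos : (0:ℝ) < μ 0 * 1 := by rw [mul_one]; exact hμpos 0
      have hev := hsl.eventually (eventually_gt_nhds hpos)
      have hmono : nhdsWithin (0:ℝ) (Ioi 0) ≤ nhdsWithin (0:ℝ) {(0:ℝ)}ᶜ :=
        nhdsWithin_mono 0 (fun z hz => ne_of_gt hz)
      have hev' := hev.filter_mono hmono
      have hIoo : Ioo (0:ℝ) 1 ∈ nhdsWithin (0:ℝ) (Ioi 0) :=
        Ioo_mem_nhdsGT zero_lt_one
      obtain ⟨z, hz1, hz2⟩ := (hev'.and (Filter.eventually_of_mem hIoo fun w hw => hw)).exists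
      refine ⟨z, hz2, ?_⟩
      rw [slope_def_field, (h0 Estar).2.1, sub_zero, sub_zero] at hz1
      rcases div_pos_iff.1 hz1 with ⟨hh1, _⟩ | ⟨_, hh2⟩
      · exact hh1
      · linarith [hz2.1]
    obtain ⟨Pv, hPv⟩ : ∃ v : ℝ, v = ∫ s in (0:ℝ)..1, ε s * (Ψ Estar s 0 0 * Ψ Estar s 0 0) :=
      ⟨_, rfl⟩
    obtain ⟨Qv, hQv⟩ : ∃ v : ℝ, v = ∫ s in (0:ℝ)..1, ε s * (Ψ Estar s 0 0 * Ψ Estar s 0 1) :=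
      ⟨_, rfl⟩
    obtain ⟨Rv, hRv⟩ : ∃ v : ℝ, v = ∫ s in (0:ℝ)..1, ε s * (Ψ Estar s 0 1 * Ψ Estar s 0 1) :=
      ⟨_, rfl⟩
    have hPpos : 0 < Pv := by
      rw [hPv]
      apply intervalIntegral.integral_pos zero_lt_one
      · exact (hεc.mul ((hcont Estar 0 0).mul (hcont Estar 0 0))).continuousOn
      · intro x _; exact mul_nonneg (hεpos x).le (mul_self_nonneg _)
      · refine ⟨0, ⟨le_refl 0, zero_le_one⟩, ?_⟩
        rw [(h0 Estar).1]
        have := hεpos 0; nlinarith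
    have hIq : 0 < ∫ s in (0:ℝ)..1, ε s * ((Qv / Pv * Ψ Estar s 0 0 - Ψ Estar s 0 1)
        * (Qv / Pv * Ψ Estar s 0 0 - Ψ Estar s 0 1)) := by
      apply intervalIntegral.integral_pos zero_lt_one
      · exact (hεc.mul (((continuous_const.mul (hcont Estar 0 0)).sub (hcont Estar 0 1)).mul
          ((continuous_const.mul (hcont Estar 0 0)).sub (hcont Estar 0 1)))).continuousOn
      · intro x _; exact mul_nonneg (hεpos x).le (mul_self_nonneg _)
      · rcases eq_or_ne (Qv / Pv) 0 with hq0 | hq0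
        · refine ⟨y, ⟨hy01.1.le, hy01.2.le⟩, ?_⟩
          rw [hq0]
          nlinarith [mul_pos (hεpos y) (mul_pos hy2pos hy2pos)]
        · refine ⟨0, ⟨le_refl 0, zero_le_one⟩, ?_⟩
          rw [(h0 Estar).1, (h0 Estar).2.1]
          have h2 : 0 < (Qv / Pv) * (Qv / Pv) := mul_self_pos.2 hq0
          nlinarith [mul_pos (hεpos 0) h2]
    have hexp : (∫ s in (0:ℝ)..1, ε s * ((Qv / Pv * Ψ Estar s 0 0 - Ψ Estar s 0 1)
        * (Qv / Pv * Ψ Estar s 0 0 - Ψ Estar s 0 1)))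
        = Qv / Pv * (Qv / Pv) * Pv - 2 * (Qv / Pv) * Qv + Rv := by
      have hiPP : IntervalIntegrable (fun s => ε s * (Ψ Estar s 0 0 * Ψ Estar s 0 0))
          MeasureTheory.volume 0 1 :=
        (hεc.mul ((hcont Estar 0 0).mul (hcont Estar 0 0))).intervalIntegrable 0 1
      have hiPQ : IntervalIntegrable (fun s => ε s * (Ψ Estar s 0 0 * Ψ Estar s 0 1))
          MeasureTheory.volume 0 1 :=
        (hεc.mul ((hcont Estar 0 0).mul (hcont Estar 0 1))).intervalIntegrable 0 1
      have hiQQ : IntervalIntegrable (fun s => ε s * (Ψ Estar s 0 1 * Ψ Estar s 0 1))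
          MeasureTheory.volume 0 1 :=
        (hεc.mul ((hcont Estar 0 1).mul (hcont Estar 0 1))).intervalIntegrable 0 1
      rw [hcg _ (fun s => (Qv / Pv * (Qv / Pv)) * (ε s * (Ψ Estar s 0 0 * Ψ Estar s 0 0))
          - (2 * (Qv / Pv)) * (ε s * (Ψ Estar s 0 0 * Ψ Estar s 0 1))
          + ε s * (Ψ Estar s 0 1 * Ψ Estar s 0 1)) (fun s => by ring)]
      rw [intervalIntegral.integral_add ((hiPP.const_mul _).sub (hiPQ.const_mul _)) hiQQ,
        intervalIntegral.integral_sub (hiPP.const_mul _) (hiPQ.const_mul _),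
        intervalIntegral.integral_const_mul, intervalIntegral.integral_const_mul,
        ← hPv, ← hQv, ← hRv]
    have htq : Qv / Pv * Pv = Qv := div_mul_cancel₀ _ (ne_of_gt hPpos)
    have hkey : Pv * (Qv / Pv * (Qv / Pv) * Pv - 2 * (Qv / Pv) * Qv + Rv)
        = Pv * Rv - Qv * Qv := by
      field_simp
      ring
    have h2 := mul_pos hPpos (hexp ▸ hIq)
    rw [hkey] at h2
    have haQ : a = 2 * (Qv * Qv - Pv * Rv) := by
      have c1 : (∫ x in (0:ℝ)..1, ε x * Ψ Estar x 0 0 * Ψ Estar x 0 1)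
          = ∫ s in (0:ℝ)..1, ε s * (Ψ Estar s 0 0 * Ψ Estar s 0 1) := hcg _ _ (fun s => by ring)
      have c2 : (∫ x in (0:ℝ)..1, ε x * (Ψ Estar x 0 0) ^ 2)
          = ∫ s in (0:ℝ)..1, ε s * (Ψ Estar s 0 0 * Ψ Estar s 0 0) := hcg _ _ (fun s => by ring)
      have c3 : (∫ x in (0:ℝ)..1, ε x * (Ψ Estar x 0 1) ^ 2)
          = ∫ s in (0:ℝ)..1, ε s * (Ψ Estar s 0 1 * Ψ Estar s 0 1) := hcg _ _ (fun s => by ring)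
      rw [ha, c1, c2, c3, ← hPv, ← hQv, ← hRv]; ring
    rw [haQ]
    linarith
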